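/- arXiv:2412.04031 — 2 statements merged into one kernel-verified Lean document; each statement's English description precedes it below -/
import Mathlib

section
/- Fix γ ∈ (0, ln(3/2)) and let m₁ ≥ 1 be a real number. Define m₂ = ((m₁ − 1)·(sinh²γ − (2/3)sinh³γ) − 2·ln(m₁)) / (sinh²γ − sinh³γ). Then m₂ < 1.243·m₁. -/
theorem stmt_12 (γ : ℝ) (h0 : 0 < γ) (h1 : γ < Real.log (3 / 2))
    (m₁ : ℝ) (hm₁ : 1 ≤ m₁)
    (m₂ : ℝ)
    (hm₂ : m₂ = ((m₁ - 1) * (Real.sinh γ ^ 2 - (2 / 3) * Real.sinh γ ^ 3)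
        - 2 * Real.log m₁) / (Real.sinh γ ^ 2 - Real.sinh γ ^ 3)) :
    m₂ < 1.243 * m₁ := by
  set s := Real.sinh γ with hs
  have hs0 : 0 < s := Real.sinh_pos_iff.mpr h0
  have hs1 : s < 5 / 12 := by
    have h := Real.sinh_lt_sinh.mpr h1
    rw [Real.sinh_log (by norm_num : (0:ℝ) < 3/2)] at h
    norm_num at h
    linarith
  have hD : 0 < s ^ 2 - s ^ 3 := by nlinarith
  have hlog : 0 ≤ Real.log m₁ := Real.log_nonneg hm₁
  rw [hm₂, div_lt_iff₀ hD]
  nlinarith [mul_nonneg (sub_nonneg.mpr hm₁) (sq_nonneg s), sq_nonneg s,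
    mul_nonneg (mul_nonneg (sub_nonneg.mpr hm₁) hs0.le) (sq_nonneg s)]
end

section
/- Let y ∈ R^n be nonzero and δ ∈ R^n with ‖δ‖ < ‖y‖. Then y + δ ≠ 0 and cos(y, y + δ) ≥ 1 − ‖δ‖²/(2·‖y‖·(‖y‖ − ‖δ‖)). -/
open scoped RealInnerProductSpace
open Matrix

theorem stmt_18 {n : ℕ} (y δ : EuclideanSpace ℝ (Fin n)) (hy : y ≠ 0)
    (h : ‖δ‖ < ‖y‖) :
    y + δ ≠ 0 ∧
    1 - ‖δ‖ ^ 2 / (2 * ‖y‖ * (‖y‖ - ‖δ‖)) ≤ ⟪y, y + δ⟫ / (‖y‖ * ‖y + δ‖) := by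
  have hb : ‖y‖ - ‖δ‖ ≤ ‖y + δ‖ := by
    have := norm_add_le (y + δ) (-δ)
    simp only [add_neg_cancel_right, norm_neg] at this
    linarith
  have hbpos : (0:ℝ) < ‖y + δ‖ := lt_of_lt_of_le (by linarith) hb
  have ha : (0:ℝ) < ‖y‖ := norm_pos_iff.mpr hy
  have hne : y + δ ≠ 0 := norm_pos_iff.mp hbpos
  refine ⟨hne, ?_⟩
  have hkey : ‖δ‖ ^ 2 = ‖y + δ‖ ^ 2 - 2 * ⟪y, y + δ⟫ + ‖y‖ ^ 2 := by
    have h2 := norm_sub_sq_real (y + δ) y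
    simp only [add_sub_cancel_left, real_inner_comm] at h2
    linarith
  have hAM : 2 * ‖y‖ * ‖y + δ‖ ≤ ‖y + δ‖ ^ 2 + ‖y‖ ^ 2 := by nlinarith [sq_nonneg (‖y + δ‖ - ‖y‖)]
  have hmain : ‖y‖ * ‖y + δ‖ - ‖δ‖ ^ 2 / 2 ≤ ⟪y, y + δ⟫ := by nlinarith
  have h1 : 1 - ‖δ‖ ^ 2 / (2 * ‖y‖ * (‖y‖ - ‖δ‖)) ≤ 1 - ‖δ‖ ^ 2 / (2 * ‖y‖ * ‖y + δ‖) := by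
    have hd : (0:ℝ) < ‖y‖ - ‖δ‖ := by linarith
    have hd : (0:ℝ) < 2 * ‖y‖ * (‖y‖ - ‖δ‖) := by nlinarith
    have hle : 2 * ‖y‖ * (‖y‖ - ‖δ‖) ≤ 2 * ‖y‖ * ‖y + δ‖ := by nlinarith
    exact sub_le_sub_left (div_le_div_of_nonneg_left (sq_nonneg _) hd hle) 1
  refine h1.trans ?_
  have heq : 1 - ‖δ‖ ^ 2 / (2 * ‖y‖ * ‖y + δ‖)
      = (‖y‖ * ‖y + δ‖ - ‖δ‖ ^ 2 / 2) / (‖y‖ * ‖y + δ‖) := by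
    field_simp
  rw [heq]
  exact (div_le_div_iff_of_pos_right (by positivity)).mpr hmain
end
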